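/- Let X ∈ ℝ^{n×m} satisfy the restricted isometry property of order 2s with constant δ ∈ [0,1), let h ∈ ℝ^m, and let T₀ ⊆ {1,…,m} with |T₀| ≤ s satisfy ‖h_{T₀ᶜ}‖₁ ≤ ‖h_{T₀}‖₁. Let T₁ ⊆ T₀ᶜ with |T₁| ≤ s be a set of indices of the s largest-magnitude coordinates of h restricted to T₀ᶜ (i.e. |h_j| ≥ |h_k| for all j ∈ T₁ and k ∈ T₀ᶜ \ T₁), and write T₀₁ := T₀ ∪ T₁. Then ‖Xh‖₂ ≥ (1 − (√2+1)δ)·‖h_{T₀₁}‖₂. -/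

import Mathlib

open Matrix Finset

set_option maxHeartbeats 1000000


namespace RIPKey

variable {n m : ℕ}

def restr (h : Fin m → ℝ) (S : Finset (Fin m)) : Fin m → ℝ :=
  fun j => if j ∈ S then h j else 0

lemma restr_support (h : Fin m → ℝ) (S : Finset (Fin m)) :
    (Finset.univ.filter fun j => restr h S j ≠ 0) ⊆ S := by
  intro j hj
  simp only [mem_filter, restr] at hj
  by_contra hc; simp [hc] at hj

lemma sum_sq_restr (h : Fin m → ℝ) (S : Finset (Fin m)) :
    ∑ j, (restr h S j)^2 = ∑ j ∈ S, (h j)^2 := by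
  have : ∀ j, (restr h S j)^2 = if j ∈ S then (h j)^2 else 0 := by
    intro j; unfold restr; split_ifs <;> simp
  simp_rw [this]
  rw [Finset.sum_ite_mem, Finset.univ_inter]

lemma restr_add_of_disjoint (h : Fin m → ℝ) (S T : Finset (Fin m)) (hd : Disjoint S T) :
    restr h (S ∪ T) = restr h S + restr h T := by
  funext j
  simp only [restr, Pi.add_apply, Finset.mem_union]
  by_cases hS : j ∈ S
  · have : j ∉ T := fun hT => (Finset.disjoint_left.mp hd hS) hT
    simp [hS, this]
  · by_cases hT : j ∈ T <;> simp [hS, hT]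

lemma exists_top_subset (h : Fin m → ℝ) :
    ∀ (t : ℕ) (R B₀ : Finset (Fin m)), B₀ ⊆ R →
    (∀ j ∈ B₀, ∀ k ∈ R \ B₀, |h k| ≤ |h j|) → B₀.card ≤ t → t ≤ R.card →
    ∃ B : Finset (Fin m), B₀ ⊆ B ∧ B ⊆ R ∧ B.card = t ∧
      ∀ j ∈ B, ∀ k ∈ R \ B, |h k| ≤ |h j| := by
  intro t
  induction t with
  | zero =>
    intro R B₀ hsub htop hc1 _
    have : B₀ = ∅ := Finset.card_eq_zero.mp (Nat.le_zero.mp hc1)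
    exact ⟨B₀, Finset.Subset.refl _, hsub, by simp [this], by rw [this] at htop ⊢; exact htop⟩
  | succ t ih =>
    intro R B₀ hsub htop hc1 hc2
    by_cases heq : B₀.card = t + 1
    · exact ⟨B₀, Finset.Subset.refl _, hsub, heq, htop⟩
    · have hc1' : B₀.card ≤ t := Nat.lt_succ_iff.mp (lt_of_le_of_ne hc1 heq)
      obtain ⟨B, hB₀B, hBR, hBcard, hBtop⟩ :=
        ih R B₀ hsub htop hc1' (le_trans (Nat.le_succ t) hc2)
      have hne : (R \ B).Nonempty := by
        rw [← Finset.card_pos, Finset.card_sdiff_of_subset hBR, hBcard]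
        omega
      obtain ⟨a, haRB, hamax⟩ := Finset.exists_max_image (R \ B) (fun j => |h j|) hne
      have haR : a ∈ R := (Finset.mem_sdiff.mp haRB).1
      have haB : a ∉ B := (Finset.mem_sdiff.mp haRB).2
      refine ⟨insert a B, le_trans hB₀B (Finset.subset_insert a B),
        Finset.insert_subset haR hBR, by rw [Finset.card_insert_of_notMem haB, hBcard], ?_⟩
      intro j hj k hk
      have hkRB : k ∈ R \ B := by
        rw [Finset.mem_sdiff] at hk ⊢
        exact ⟨hk.1, fun hc => hk.2 (Finset.mem_insert_of_mem hc)⟩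
      rcases Finset.mem_insert.mp hj with rfl | hjB
      · exact hamax k hkRB
      · exact hBtop j hjB k hkRB

lemma cross_bound_raw (s : ℕ) (X : Matrix (Fin n) (Fin m) ℝ) (δ : ℝ)
    (hRIP : ∀ g : Fin m → ℝ, (Finset.univ.filter fun j => g j ≠ 0).card ≤ 2 * s →
      (1 - δ) * ∑ j, (g j) ^ 2 ≤ (∑ i, ((X *ᵥ g) i) ^ 2) ∧
      (∑ i, ((X *ᵥ g) i) ^ 2) ≤ (1 + δ) * ∑ j, (g j) ^ 2)
    (u v : Fin m → ℝ)
    (hcard : (univ.filter fun j => u j ≠ 0).card + (univ.filter fun j => v j ≠ 0).card ≤ 2 * s)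
    (hdisj : ∀ j, u j = 0 ∨ v j = 0) :
    |∑ i, (X *ᵥ u) i * (X *ᵥ v) i| ≤ δ / 2 * (∑ j, (u j)^2 + ∑ j, (v j)^2) := by
  have hsum_add : ∑ j, ((u + v) j)^2 = ∑ j, (u j)^2 + ∑ j, (v j)^2 := by
    rw [← Finset.sum_add_distrib]
    refine Finset.sum_congr rfl fun j _ => ?_
    rcases hdisj j with h0 | h0 <;> simp [Pi.add_apply, h0]
  have hsum_sub : ∑ j, ((u - v) j)^2 = ∑ j, (u j)^2 + ∑ j, (v j)^2 := by
    rw [← Finset.sum_add_distrib]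
    refine Finset.sum_congr rfl fun j _ => ?_
    rcases hdisj j with h0 | h0 <;> simp [Pi.sub_apply, h0]
  have hcard_add : (univ.filter fun j => (u + v) j ≠ 0).card ≤ 2 * s := by
    refine le_trans (le_trans (Finset.card_le_card (fun j hj => ?_)) (Finset.card_union_le
      (univ.filter fun j => u j ≠ 0) (univ.filter fun j => v j ≠ 0))) hcard
    simp only [mem_filter, mem_union, mem_univ, true_and, Pi.add_apply] at hj ⊢
    by_contra hc
    push_neg at hc
    rw [hc.1, hc.2] at hj
    exact hj (by ring)
  have hcard_sub : (univ.filter fun j => (u - v) j ≠ 0).card ≤ 2 * s := by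
    refine le_trans (le_trans (Finset.card_le_card (fun j hj => ?_)) (Finset.card_union_le
      (univ.filter fun j => u j ≠ 0) (univ.filter fun j => v j ≠ 0))) hcard
    simp only [mem_filter, mem_union, mem_univ, true_and, Pi.sub_apply] at hj ⊢
    by_contra hc
    push_neg at hc
    rw [hc.1, hc.2] at hj
    exact hj (by ring)
  have h1 := hRIP (u + v) hcard_add
  have h2 := hRIP (u - v) hcard_sub
  rw [Matrix.mulVec_add, hsum_add] at h1
  rw [Matrix.mulVec_sub, hsum_sub] at h2
  have e1 : ∑ i, ((X *ᵥ u + X *ᵥ v) i)^2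
      = ∑ i, ((X *ᵥ u) i)^2 + ∑ i, ((X *ᵥ v) i)^2 + 2 * ∑ i, (X *ᵥ u) i * (X *ᵥ v) i := by
    rw [Finset.mul_sum, ← Finset.sum_add_distrib, ← Finset.sum_add_distrib]
    exact Finset.sum_congr rfl fun i _ => by simp [Pi.add_apply]; ring
  have e2 : ∑ i, ((X *ᵥ u - X *ᵥ v) i)^2
      = ∑ i, ((X *ᵥ u) i)^2 + ∑ i, ((X *ᵥ v) i)^2 - 2 * ∑ i, (X *ᵥ u) i * (X *ᵥ v) i := by
    rw [Finset.mul_sum, ← Finset.sum_add_distrib, ← Finset.sum_sub_distrib]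
    exact Finset.sum_congr rfl fun i _ => by simp [Pi.sub_apply]; ring
  rw [e1] at h1
  rw [e2] at h2
  obtain ⟨h11, h12⟩ := h1
  obtain ⟨h21, h22⟩ := h2
  rw [abs_le]
  constructor <;> linarith

lemma cross_bound (s : ℕ) (X : Matrix (Fin n) (Fin m) ℝ) (δ : ℝ)
    (hRIP : ∀ g : Fin m → ℝ, (Finset.univ.filter fun j => g j ≠ 0).card ≤ 2 * s →
      (1 - δ) * ∑ j, (g j) ^ 2 ≤ (∑ i, ((X *ᵥ g) i) ^ 2) ∧
      (∑ i, ((X *ᵥ g) i) ^ 2) ≤ (1 + δ) * ∑ j, (g j) ^ 2)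
    (u v : Fin m → ℝ)
    (hcard : (univ.filter fun j => u j ≠ 0).card + (univ.filter fun j => v j ≠ 0).card ≤ 2 * s)
    (hdisj : ∀ j, u j = 0 ∨ v j = 0) :
    |∑ i, (X *ᵥ u) i * (X *ᵥ v) i|
      ≤ δ * Real.sqrt (∑ j, (u j)^2) * Real.sqrt (∑ j, (v j)^2) := by
  by_cases hu0 : ∑ j, (u j)^2 = 0
  · have hu : u = 0 := by
      funext j
      have := (Finset.sum_eq_zero_iff_of_nonneg (fun j _ => sq_nonneg (u j))).mp hu0 j (mem_univ j)
      exact pow_eq_zero_iff (by norm_num) |>.mp this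
    rw [hu]
    simp [Matrix.mulVec_zero]
  by_cases hv0 : ∑ j, (v j)^2 = 0
  · have hv : v = 0 := by
      funext j
      have := (Finset.sum_eq_zero_iff_of_nonneg (fun j _ => sq_nonneg (v j))).mp hv0 j (mem_univ j)
      exact pow_eq_zero_iff (by norm_num) |>.mp this
    rw [hv]
    simp [Matrix.mulVec_zero]
  have hupos : 0 < ∑ j, (u j)^2 :=
    lt_of_le_of_ne (Finset.sum_nonneg fun j _ => sq_nonneg _) (Ne.symm hu0)
  have hvpos : 0 < ∑ j, (v j)^2 :=
    lt_of_le_of_ne (Finset.sum_nonneg fun j _ => sq_nonneg _) (Ne.symm hv0)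
  have hapos : 0 < Real.sqrt (∑ j, (v j)^2) := Real.sqrt_pos.mpr hvpos
  have hbpos : 0 < Real.sqrt (∑ j, (u j)^2) := Real.sqrt_pos.mpr hupos
  set a := Real.sqrt (∑ j, (v j)^2)
  set b := Real.sqrt (∑ j, (u j)^2)
  have ha2 : a ^ 2 = ∑ j, (v j)^2 := Real.sq_sqrt hvpos.le
  have hb2 : b ^ 2 = ∑ j, (u j)^2 := Real.sq_sqrt hupos.le
  have hraw := cross_bound_raw s X δ hRIP (a • u) (b • v) ?_ ?_
  · rw [Matrix.mulVec_smul, Matrix.mulVec_smul] at hraw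
    have hsum1 : ∑ i, (a • (X *ᵥ u)) i * (b • (X *ᵥ v)) i
        = a * b * ∑ i, (X *ᵥ u) i * (X *ᵥ v) i := by
      rw [Finset.mul_sum]
      exact Finset.sum_congr rfl fun i _ => by simp [smul_eq_mul]; ring
    have hsum2 : ∑ j, ((a • u) j)^2 = a^2 * b^2 := by
      rw [hb2, Finset.mul_sum]
      exact Finset.sum_congr rfl fun j _ => by simp [smul_eq_mul]; ring
    have hsum3 : ∑ j, ((b • v) j)^2 = b^2 * a^2 := by
      rw [ha2, Finset.mul_sum]
      exact Finset.sum_congr rfl fun j _ => by simp [smul_eq_mul]; ring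
    rw [hsum1, hsum2, hsum3, abs_mul, abs_mul, abs_of_pos hapos, abs_of_pos hbpos] at hraw
    nlinarith [hraw, mul_pos hapos hbpos, abs_nonneg (∑ i, (X *ᵥ u) i * (X *ᵥ v) i)]
  · refine le_trans (Nat.add_le_add ?_ ?_) hcard <;>
      refine Finset.card_le_card fun j hj => ?_ <;>
      simp only [mem_filter, mem_univ, true_and, Pi.smul_apply, smul_eq_mul] at hj ⊢ <;>
      exact fun hc => hj (by rw [hc, mul_zero])
  · intro j
    rcases hdisj j with h0 | h0
    · left; simp [h0]
    · right; simp [h0]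

lemma tail_bound (s : ℕ) (hs : 1 ≤ s) (X : Matrix (Fin n) (Fin m) ℝ) (δ : ℝ) (hδ0 : 0 ≤ δ)
    (hRIP : ∀ g : Fin m → ℝ, (Finset.univ.filter fun j => g j ≠ 0).card ≤ 2 * s →
      (1 - δ) * ∑ j, (g j) ^ 2 ≤ (∑ i, ((X *ᵥ g) i) ^ 2) ∧
      (∑ i, ((X *ᵥ g) i) ^ 2) ≤ (1 + δ) * ∑ j, (g j) ^ 2)
    (h : Fin m → ℝ) (u : Fin m → ℝ) (S : Finset (Fin m))
    (hu_supp : ∀ j, u j ≠ 0 → j ∈ S) (hScard : S.card ≤ s) :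
    ∀ (N : ℕ) (R : Finset (Fin m)), R.card ≤ N → Disjoint S R →
    ∀ α : ℝ, 0 ≤ α → (∀ k ∈ R, |h k| ≤ α) →
    |∑ i, (X *ᵥ u) i * (X *ᵥ restr h R) i|
      ≤ δ * Real.sqrt (∑ j, (u j)^2)
         * (Real.sqrt s * α + (∑ k ∈ R, |h k|) / Real.sqrt s) := by
  have hsqs : (0:ℝ) < Real.sqrt s := Real.sqrt_pos.mpr (by exact_mod_cast hs)
  have hD0 : 0 ≤ δ * Real.sqrt (∑ j, (u j)^2) :=
    mul_nonneg hδ0 (Real.sqrt_nonneg _)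
  -- the "small" case, applying directly cross_bound
  have small : ∀ (R : Finset (Fin m)), R.card ≤ s → Disjoint S R →
      ∀ α : ℝ, 0 ≤ α → (∀ k ∈ R, |h k| ≤ α) →
      |∑ i, (X *ᵥ u) i * (X *ᵥ restr h R) i|
        ≤ δ * Real.sqrt (∑ j, (u j)^2) * (Real.sqrt s * α) := by
    intro R hRs hdisj α hα hbd
    have hcross := cross_bound s X δ hRIP u (restr h R) ?_ ?_
    · refine le_trans hcross ?_
      rw [mul_assoc, mul_assoc]
      refine mul_le_mul_of_nonneg_left ?_ hδ0
      refine mul_le_mul_of_nonneg_left ?_ (Real.sqrt_nonneg _)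
      rw [sum_sq_restr]
      have h1 : ∑ j ∈ R, (h j)^2 ≤ (s:ℝ) * α^2 := by
        calc ∑ j ∈ R, (h j)^2 ≤ ∑ j ∈ R, α^2 := by
              refine Finset.sum_le_sum fun j hj => ?_
              rw [← sq_abs]
              exact pow_le_pow_left₀ (abs_nonneg _) (hbd j hj) 2
          _ = (R.card : ℝ) * α^2 := by rw [Finset.sum_const, nsmul_eq_mul]
          _ ≤ (s:ℝ) * α^2 := by
              refine mul_le_mul_of_nonneg_right ?_ (sq_nonneg _)
              exact_mod_cast hRs
      calc Real.sqrt (∑ j ∈ R, (h j)^2) ≤ Real.sqrt ((s:ℝ) * α^2) := Real.sqrt_le_sqrt h1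
        _ = Real.sqrt s * α := by
            rw [Real.sqrt_mul (Nat.cast_nonneg s), Real.sqrt_sq hα]
    · calc (univ.filter fun j => u j ≠ 0).card + (univ.filter fun j => restr h R j ≠ 0).card
          ≤ S.card + R.card := Nat.add_le_add
            (Finset.card_le_card fun j hj => hu_supp j (by simpa using hj))
            (Finset.card_le_card (restr_support h R))
        _ ≤ 2 * s := by omega
    · intro j
      by_cases hj : u j = 0
      · left; exact hj
      · right
        have hjS : j ∈ S := hu_supp j hj
        have : j ∉ R := Finset.disjoint_left.mp hdisj hjS
        simp [restr, this]
  intro N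
  induction N with
  | zero =>
    intro R hRN hdisj α hα hbd
    have hRs : R.card ≤ s := le_trans hRN (by omega)
    refine le_trans (small R hRs hdisj α hα hbd) ?_
    refine mul_le_mul_of_nonneg_left ?_ hD0
    have : 0 ≤ (∑ k ∈ R, |h k|) / Real.sqrt s :=
      div_nonneg (Finset.sum_nonneg fun k _ => abs_nonneg _) hsqs.le
    linarith
  | succ N ih =>
    intro R hRN hdisj α hα hbd
    by_cases hRs : R.card ≤ s
    · refine le_trans (small R hRs hdisj α hα hbd) ?_
      refine mul_le_mul_of_nonneg_left ?_ hD0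
      have : 0 ≤ (∑ k ∈ R, |h k|) / Real.sqrt s :=
        div_nonneg (Finset.sum_nonneg fun k _ => abs_nonneg _) hsqs.le
      linarith
    · push_neg at hRs
      obtain ⟨B, -, hBR, hBcard, hBtop⟩ := exists_top_subset h s R ∅
        (Finset.empty_subset R) (by simp) (by simp) hRs.le
      have hBne : B.Nonempty := Finset.card_pos.mp (by omega)
      obtain ⟨j₀, hj₀B, hj₀min⟩ := Finset.exists_min_image B (fun j => |h j|) hBne
      set α' := |h j₀| with hα'def
      have hα'0 : 0 ≤ α' := abs_nonneg _
      have hbd' : ∀ k ∈ R \ B, |h k| ≤ α' := fun k hk => hBtop j₀ hj₀B k hk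
      have hsubB : Disjoint S B := Finset.disjoint_of_subset_right hBR hdisj
      have hsubRB : Disjoint S (R \ B) :=
        Finset.disjoint_of_subset_right (Finset.sdiff_subset) hdisj
      have hsplit : restr h R = restr h B + restr h (R \ B) := by
        rw [← restr_add_of_disjoint h B (R \ B) (Finset.disjoint_sdiff),
          Finset.union_sdiff_of_subset hBR]
      have hRBcard : (R \ B).card ≤ N := by
        rw [Finset.card_sdiff_of_subset hBR, hBcard]; omega
      have hsum_split : ∑ i, (X *ᵥ u) i * (X *ᵥ restr h R) i
          = ∑ i, (X *ᵥ u) i * (X *ᵥ restr h B) i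
            + ∑ i, (X *ᵥ u) i * (X *ᵥ restr h (R \ B)) i := by
        rw [hsplit, Matrix.mulVec_add, ← Finset.sum_add_distrib]
        exact Finset.sum_congr rfl fun i _ => by simp [Pi.add_apply]; ring
      have h1 : |∑ i, (X *ᵥ u) i * (X *ᵥ restr h B) i|
          ≤ δ * Real.sqrt (∑ j, (u j)^2) * (Real.sqrt s * α) := by
        refine small B (le_of_eq hBcard) hsubB α hα fun k hk => hbd k (hBR hk)
      have h2 := ih (R \ B) hRBcard hsubRB α' hα'0 hbd'
      -- √s * α' ≤ (∑ k ∈ B, |h k|)/√s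
      have hkey : Real.sqrt s * α' ≤ (∑ k ∈ B, |h k|) / Real.sqrt s := by
        rw [le_div_iff₀ hsqs]
        have : Real.sqrt s * α' * Real.sqrt s = (s:ℝ) * α' := by
          rw [mul_comm (Real.sqrt s * α') (Real.sqrt s), ← mul_assoc,
            Real.mul_self_sqrt (Nat.cast_nonneg s)]
        rw [this]
        have := Finset.card_nsmul_le_sum B (fun j => |h j|) α' (fun j hj => hj₀min j hj)
        rw [hBcard, nsmul_eq_mul] at this
        exact_mod_cast this
      have hsum_abs : ∑ k ∈ B, |h k| + ∑ k ∈ R \ B, |h k| = ∑ k ∈ R, |h k| := by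
        rw [add_comm]
        exact Finset.sum_sdiff hBR
      calc |∑ i, (X *ᵥ u) i * (X *ᵥ restr h R) i|
          ≤ |∑ i, (X *ᵥ u) i * (X *ᵥ restr h B) i|
            + |∑ i, (X *ᵥ u) i * (X *ᵥ restr h (R \ B)) i| := by
            rw [hsum_split]; exact abs_add_le _ _
        _ ≤ δ * Real.sqrt (∑ j, (u j)^2) * (Real.sqrt s * α)
            + δ * Real.sqrt (∑ j, (u j)^2) * (Real.sqrt s * α' + (∑ k ∈ R \ B, |h k|) / Real.sqrt s) :=
            add_le_add h1 h2
        _ ≤ δ * Real.sqrt (∑ j, (u j)^2) * (Real.sqrt s * α)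
            + δ * Real.sqrt (∑ j, (u j)^2) * ((∑ k ∈ B, |h k|) / Real.sqrt s + (∑ k ∈ R \ B, |h k|) / Real.sqrt s) := by
            refine add_le_add_right (mul_le_mul_of_nonneg_left ?_ hD0) _
            linarith
        _ = δ * Real.sqrt (∑ j, (u j)^2) * (Real.sqrt s * α + (∑ k ∈ R, |h k|) / Real.sqrt s) := by
            rw [← hsum_abs, add_div]
            ring

lemma core (s : ℕ) (hs : 1 ≤ s) (X : Matrix (Fin n) (Fin m) ℝ)
    (δ : ℝ) (hδ0 : 0 ≤ δ) (hδ1 : δ < 1)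
    (hRIP : ∀ g : Fin m → ℝ, (Finset.univ.filter fun j => g j ≠ 0).card ≤ 2 * s →
      (1 - δ) * ∑ j, (g j) ^ 2 ≤ (∑ i, ((X *ᵥ g) i) ^ 2) ∧
      (∑ i, ((X *ᵥ g) i) ^ 2) ≤ (1 + δ) * ∑ j, (g j) ^ 2)
    (h : Fin m → ℝ) (T₀ T₁ : Finset (Fin m))
    (hT₀card : T₀.card ≤ s)
    (hcone : (∑ j ∈ T₀ᶜ, |h j|) ≤ ∑ j ∈ T₀, |h j|)
    (hT₁sub : T₁ ⊆ T₀ᶜ) (hT₁card : T₁.card ≤ s)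
    (hT₁top : ∀ j ∈ T₁, ∀ k ∈ T₀ᶜ \ T₁, |h k| ≤ |h j|)
    (hfull : (T₀ᶜ \ T₁).Nonempty → T₁.card = s)
    (hc : 0 < 1 - (Real.sqrt 2 + 1) * δ) :
    (1 - (Real.sqrt 2 + 1) * δ) *
        Real.sqrt (∑ j ∈ T₀ ∪ T₁, (h j) ^ 2) ≤
      Real.sqrt (∑ i, ((X *ᵥ h) i) ^ 2) := by
  have hsqs : (0:ℝ) < Real.sqrt s := Real.sqrt_pos.mpr (by exact_mod_cast hs)
  set r := Real.sqrt 2 with hrdef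
  have hr2 : r ^ 2 = 2 := Real.sq_sqrt (by norm_num)
  have hr1 : 1 ≤ r := by nlinarith [Real.sqrt_nonneg 2]
  set c := 1 - (r + 1) * δ with hcdef
  set N := Real.sqrt (∑ j ∈ T₀ ∪ T₁, (h j) ^ 2) with hNdef
  have hNsum_nonneg : 0 ≤ ∑ j ∈ T₀ ∪ T₁, (h j) ^ 2 := Finset.sum_nonneg fun j _ => sq_nonneg _
  have hN2 : N ^ 2 = ∑ j ∈ T₀ ∪ T₁, (h j) ^ 2 := Real.sq_sqrt hNsum_nonneg
  have hN0 : 0 ≤ N := Real.sqrt_nonneg _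
  rcases eq_or_lt_of_le hN0 with hN | hN
  · rw [← hN, mul_zero]
    exact Real.sqrt_nonneg _
  have hdisj01 : Disjoint T₀ T₁ := Finset.disjoint_left.mpr
    fun a ha0 ha1 => (Finset.mem_compl.mp (hT₁sub ha1)) ha0
  have hN2split : N ^ 2 = ∑ j ∈ T₀, (h j)^2 + ∑ j ∈ T₁, (h j)^2 := by
    rw [hN2, Finset.sum_union hdisj01]
  set R : Finset (Fin m) := T₀ᶜ \ T₁ with hRdef
  set u := restr h (T₀ ∪ T₁) with hudef
  set w := restr h R with hwdef
  have hdisjR : Disjoint (T₀ ∪ T₁) R := by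
    rw [Finset.disjoint_union_left]
    constructor
    · exact Finset.disjoint_left.mpr fun a ha0 haR =>
        (Finset.mem_compl.mp (Finset.mem_sdiff.mp haR).1) ha0
    · exact Finset.disjoint_sdiff
  have hhuw : h = u + w := by
    funext j
    simp only [hudef, hwdef, restr, Pi.add_apply]
    by_cases hj : j ∈ T₀ ∪ T₁
    · have : j ∉ R := Finset.disjoint_left.mp hdisjR hj
      simp [hj, this]
    · have hj0 : j ∉ T₀ := fun hh => hj (Finset.mem_union_left _ hh)
      have hj1 : j ∉ T₁ := fun hh => hj (Finset.mem_union_right _ hh)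
      have : j ∈ R := Finset.mem_sdiff.mpr ⟨Finset.mem_compl.mpr hj0, hj1⟩
      simp [hj, this]
  have husum : ∑ j, (u j)^2 = N ^ 2 := by rw [hudef, sum_sq_restr, hN2]
  have hucard : (univ.filter fun j => u j ≠ 0).card ≤ 2 * s := by
    calc (univ.filter fun j => u j ≠ 0).card ≤ (T₀ ∪ T₁).card :=
          Finset.card_le_card (restr_support h (T₀ ∪ T₁))
      _ ≤ T₀.card + T₁.card := Finset.card_union_le _ _
      _ ≤ 2 * s := by omega
  have hQu := (hRIP u hucard).1
  rw [husum] at hQu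
  set Qu := ∑ i, ((X *ᵥ u) i) ^ 2 with hQudef
  -- the key cross-term estimate
  have hw_est : |∑ i, (X *ᵥ u) i * (X *ᵥ w) i| ≤ r * δ * N ^ 2 := by
    rcases Finset.eq_empty_or_nonempty R with hRe | hRne
    · have : w = 0 := by
        funext j; simp [hwdef, restr, hRe]
      rw [this, Matrix.mulVec_zero]
      simp only [Pi.zero_apply, mul_zero, Finset.sum_const_zero, abs_zero]
      positivity
    · have hT₁cardeq : T₁.card = s := hfull hRne
      have hT₁ne : T₁.Nonempty := Finset.card_pos.mp (by omega)
      obtain ⟨j₀, hj₀T₁, hj₀min⟩ := Finset.exists_min_image T₁ (fun j => |h j|) hT₁ne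
      set α := |h j₀| with hαdef
      have hα0 : 0 ≤ α := abs_nonneg _
      have hbdR : ∀ k ∈ R, |h k| ≤ α := fun k hk => hT₁top j₀ hj₀T₁ k hk
      -- E ≤ N
      have hsα : (s : ℝ) * α ≤ ∑ k ∈ T₁, |h k| := by
        have := Finset.card_nsmul_le_sum T₁ (fun j => |h j|) α (fun j hj => hj₀min j hj)
        rw [hT₁cardeq, nsmul_eq_mul] at this
        exact_mod_cast this
      have hunionT : T₁ ∪ R = T₀ᶜ := Finset.union_sdiff_of_subset hT₁sub
      have hsum_comp : ∑ k ∈ T₁, |h k| + ∑ k ∈ R, |h k| = ∑ k ∈ T₀ᶜ, |h k| := by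
        rw [← hunionT, Finset.sum_union Finset.disjoint_sdiff]
      have hCS0 : ∑ k ∈ T₀, |h k| ≤ Real.sqrt s * Real.sqrt (∑ j ∈ T₀, (h j)^2) := by
        have hcs := Finset.sum_mul_sq_le_sq_mul_sq T₀ (fun _ => (1:ℝ)) (fun j => |h j|)
        simp only [one_mul, one_pow, Finset.sum_const, nsmul_eq_mul, mul_one, sq_abs] at hcs
        have h1 : (∑ k ∈ T₀, |h k|) = Real.sqrt ((∑ k ∈ T₀, |h k|)^2) :=
          (Real.sqrt_sq (Finset.sum_nonneg fun k _ => abs_nonneg _)).symm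
        rw [h1, ← Real.sqrt_mul (Nat.cast_nonneg s)]
        refine Real.sqrt_le_sqrt ?_
        calc (∑ k ∈ T₀, |h k|)^2 ≤ (T₀.card : ℝ) * ∑ j ∈ T₀, (h j)^2 := hcs
          _ ≤ (s:ℝ) * ∑ j ∈ T₀, (h j)^2 := by
              refine mul_le_mul_of_nonneg_right ?_ (Finset.sum_nonneg fun j _ => sq_nonneg _)
              exact_mod_cast hT₀card
      have hE : Real.sqrt s * α + (∑ k ∈ R, |h k|) / Real.sqrt s ≤ N := by
        have e1 : Real.sqrt s * α = (s:ℝ) * α / Real.sqrt s := by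
          rw [eq_div_iff hsqs.ne', mul_assoc, mul_comm α (Real.sqrt s), ← mul_assoc,
            Real.mul_self_sqrt (Nat.cast_nonneg s)]
        have e2 : Real.sqrt s * α + (∑ k ∈ R, |h k|) / Real.sqrt s
            ≤ (∑ k ∈ T₀ᶜ, |h k|) / Real.sqrt s := by
          rw [e1, ← add_div]
          refine div_le_div_of_nonneg_right ?_ hsqs.le
          rw [← hsum_comp]
          exact add_le_add_left hsα _
        refine le_trans e2 ?_
        rw [div_le_iff₀ hsqs]
        calc ∑ k ∈ T₀ᶜ, |h k| ≤ ∑ k ∈ T₀, |h k| := hcone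
          _ ≤ Real.sqrt s * Real.sqrt (∑ j ∈ T₀, (h j)^2) := hCS0
          _ ≤ Real.sqrt s * N := by
              refine mul_le_mul_of_nonneg_left ?_ hsqs.le
              rw [hNdef]
              refine Real.sqrt_le_sqrt ?_
              exact Finset.sum_le_sum_of_subset_of_nonneg Finset.subset_union_left
                (fun j _ _ => sq_nonneg _)
          _ = N * Real.sqrt s := by ring
      -- split u
      have husplit : u = restr h T₀ + restr h T₁ := by
        rw [hudef, restr_add_of_disjoint h T₀ T₁ hdisj01]
      have hsupp0 : ∀ j, restr h T₀ j ≠ 0 → j ∈ T₀ := by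
        intro j hj; by_contra hcj; exact hj (by simp [restr, hcj])
      have hsupp1 : ∀ j, restr h T₁ j ≠ 0 → j ∈ T₁ := by
        intro j hj; by_contra hcj; exact hj (by simp [restr, hcj])
      have hdisj0R : Disjoint T₀ R := Finset.disjoint_left.mpr
        fun a ha0 haR => (Finset.mem_compl.mp (Finset.mem_sdiff.mp haR).1) ha0
      have hdisj1R : Disjoint T₁ R := Finset.disjoint_sdiff
      have ht0 := tail_bound s hs X δ hδ0 hRIP h (restr h T₀) T₀ hsupp0 hT₀card
        R.card R le_rfl hdisj0R α hα0 hbdR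
      have ht1 := tail_bound s hs X δ hδ0 hRIP h (restr h T₁) T₁ hsupp1 hT₁card
        R.card R le_rfl hdisj1R α hα0 hbdR
      rw [sum_sq_restr] at ht0 ht1
      set a₀ := Real.sqrt (∑ j ∈ T₀, (h j)^2) with ha₀def
      set a₁ := Real.sqrt (∑ j ∈ T₁, (h j)^2) with ha₁def
      have ha₀0 : 0 ≤ a₀ := Real.sqrt_nonneg _
      have ha₁0 : 0 ≤ a₁ := Real.sqrt_nonneg _
      have ha₀2 : a₀^2 = ∑ j ∈ T₀, (h j)^2 := Real.sq_sqrt (Finset.sum_nonneg fun j _ => sq_nonneg _)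
      have ha₁2 : a₁^2 = ∑ j ∈ T₁, (h j)^2 := Real.sq_sqrt (Finset.sum_nonneg fun j _ => sq_nonneg _)
      have hsum_a : a₀^2 + a₁^2 = N^2 := by rw [ha₀2, ha₁2, hN2split]
      have haN : a₀ + a₁ ≤ r * N := by
        have h1 : (a₀ + a₁)^2 ≤ 2 * N^2 := by nlinarith [sq_nonneg (a₀ - a₁)]
        have h2 : (a₀ + a₁) = Real.sqrt ((a₀+a₁)^2) := (Real.sqrt_sq (by linarith)).symm
        rw [h2, hrdef]
        calc Real.sqrt ((a₀+a₁)^2) ≤ Real.sqrt (2 * N^2) := Real.sqrt_le_sqrt h1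
          _ = Real.sqrt 2 * N := by
              rw [Real.sqrt_mul (by norm_num), Real.sqrt_sq hN0]
      have hsplitsum : ∑ i, (X *ᵥ u) i * (X *ᵥ w) i
          = ∑ i, (X *ᵥ restr h T₀) i * (X *ᵥ w) i
            + ∑ i, (X *ᵥ restr h T₁) i * (X *ᵥ w) i := by
        rw [husplit, Matrix.mulVec_add, ← Finset.sum_add_distrib]
        exact Finset.sum_congr rfl fun i _ => by simp [Pi.add_apply]; ring
      set E := Real.sqrt s * α + (∑ k ∈ R, |h k|) / Real.sqrt s with hEdef
      have hE0 : 0 ≤ E := by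
        have : 0 ≤ (∑ k ∈ R, |h k|) / Real.sqrt s :=
          div_nonneg (Finset.sum_nonneg fun k _ => abs_nonneg _) hsqs.le
        have : 0 ≤ Real.sqrt s * α := mul_nonneg hsqs.le hα0
        rw [hEdef]; positivity
      calc |∑ i, (X *ᵥ u) i * (X *ᵥ w) i|
          ≤ |∑ i, (X *ᵥ restr h T₀) i * (X *ᵥ w) i|
            + |∑ i, (X *ᵥ restr h T₁) i * (X *ᵥ w) i| := by
            rw [hsplitsum]; exact abs_add_le _ _
        _ ≤ δ * a₀ * E + δ * a₁ * E := add_le_add ht0 ht1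
        _ = δ * (a₀ + a₁) * E := by ring
        _ ≤ δ * (r * N) * N := by
            refine mul_le_mul (mul_le_mul_of_nonneg_left haN hδ0) hE ?_ ?_
            · exact hE0
            · positivity
        _ = r * δ * N^2 := by ring
  -- endgame
  have hBuh : Qu - r * δ * N^2 ≤ ∑ i, (X *ᵥ u) i * (X *ᵥ h) i := by
    have : ∑ i, (X *ᵥ u) i * (X *ᵥ h) i = Qu + ∑ i, (X *ᵥ u) i * (X *ᵥ w) i := by
      rw [hhuw, Matrix.mulVec_add, hQudef, ← Finset.sum_add_distrib]
      exact Finset.sum_congr rfl fun i _ => by simp [Pi.add_apply]; ring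
    rw [this]
    have := neg_abs_le (∑ i, (X *ᵥ u) i * (X *ᵥ w) i)
    linarith [hw_est]
  set Qh := ∑ i, ((X *ᵥ h) i) ^ 2 with hQhdef
  have hQh0 : 0 ≤ Qh := Finset.sum_nonneg fun i _ => sq_nonneg _
  have hQu0 : 0 ≤ Qu := Finset.sum_nonneg fun i _ => sq_nonneg _
  set x := Real.sqrt Qu with hxdef
  have hx2 : x^2 = Qu := Real.sq_sqrt hQu0
  have hCS : ∑ i, (X *ᵥ u) i * (X *ᵥ h) i ≤ x * Real.sqrt Qh := by
    have hcs := Finset.sum_mul_sq_le_sq_mul_sq univ (fun i => (X *ᵥ u) i) (fun i => (X *ᵥ h) i)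
    calc ∑ i, (X *ᵥ u) i * (X *ᵥ h) i
        ≤ |∑ i, (X *ᵥ u) i * (X *ᵥ h) i| := le_abs_self _
      _ = Real.sqrt ((∑ i, (X *ᵥ u) i * (X *ᵥ h) i)^2) := (Real.sqrt_sq_eq_abs _).symm
      _ ≤ Real.sqrt (Qu * Qh) := Real.sqrt_le_sqrt hcs
      _ = x * Real.sqrt Qh := Real.sqrt_mul hQu0 _
  set y := Real.sqrt (1 - δ) with hydef
  have hy2 : y^2 = 1 - δ := Real.sq_sqrt (by linarith)
  have hy0 : 0 < y := Real.sqrt_pos.mpr (by linarith)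
  have hy1 : y ≤ 1 := by rw [hydef]; exact Real.sqrt_le_one.mpr (by linarith)
  have hxyN : y * N ≤ x := by
    have h1 : (1 - δ) * N^2 ≤ Qu := hQu
    have : y * N = Real.sqrt ((1-δ) * N^2) := by
      rw [Real.sqrt_mul (by linarith), Real.sqrt_sq hN0]
    rw [this, hxdef]
    exact Real.sqrt_le_sqrt h1
  have hxpos : 0 < x := lt_of_lt_of_le (by positivity) hxyN
  -- key polynomial inequality: c*N*x ≤ x^2 - r*δ*N^2
  have hkey : 1 - δ = c + r * δ := by rw [hcdef]; ring
  have hfact : 0 ≤ (x - y*N) * (x + y*N - c*N) := by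
    refine mul_nonneg (by linarith) ?_
    have h2y : 1 ≤ 2 * y := by nlinarith
    have hcle1 : c ≤ 1 := by nlinarith
    nlinarith
  have hyc : y^2 = c + r * δ := by rw [hy2, hkey]
  have hid : x^2 - c*N*x - r*δ*N^2 = (x - y*N)*(x + y*N - c*N) + c*(1-y)*N^2 := by
    linear_combination (N^2) * hyc
  have hcy : 0 ≤ c*(1-y)*N^2 := mul_nonneg (mul_nonneg hc.le (by linarith)) (sq_nonneg N)
  have hpoly : c * N * x ≤ x^2 - r * δ * N^2 := by linarith
  have hfinal : c * N * x ≤ x * Real.sqrt Qh := by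
    calc c * N * x ≤ x^2 - r * δ * N^2 := hpoly
      _ = Qu - r * δ * N^2 := by rw [hx2]
      _ ≤ ∑ i, (X *ᵥ u) i * (X *ᵥ h) i := hBuh
      _ ≤ x * Real.sqrt Qh := hCS
  have := le_of_mul_le_mul_left (by
    calc x * (c * N) = c * N * x := by ring
      _ ≤ x * Real.sqrt Qh := hfinal) hxpos
  exact this

end RIPKey


/-- **Key inequality in the proof that RIP implies the GR condition.** If `X` satisfies RIP
of order `2s` with constant `δ`, `|T₀| ≤ s`, `‖h_{T₀ᶜ}‖₁ ≤ ‖h_{T₀}‖₁`, and `T₁ ⊆ T₀ᶜ`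
(with `|T₁| ≤ s`) consists of the `s` largest-magnitude coordinates of `h` on `T₀ᶜ`, then
`‖Xh‖₂ ≥ (1 − (√2+1)δ)·‖h_{T₀∪T₁}‖₂`. -/
theorem rip_key_inequality (n m s : ℕ) (X : Matrix (Fin n) (Fin m) ℝ)
    (δ : ℝ) (hδ0 : 0 ≤ δ) (hδ1 : δ < 1)
    (hRIP : ∀ g : Fin m → ℝ, (Finset.univ.filter fun j => g j ≠ 0).card ≤ 2 * s →
      (1 - δ) * ∑ j, (g j) ^ 2 ≤ (∑ i, ((X *ᵥ g) i) ^ 2) ∧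
      (∑ i, ((X *ᵥ g) i) ^ 2) ≤ (1 + δ) * ∑ j, (g j) ^ 2)
    (h : Fin m → ℝ) (T₀ T₁ : Finset (Fin m))
    (hT₀card : T₀.card ≤ s)
    (hcone : (∑ j ∈ T₀ᶜ, |h j|) ≤ ∑ j ∈ T₀, |h j|)
    (hT₁sub : T₁ ⊆ T₀ᶜ) (hT₁card : T₁.card ≤ s)
    (hT₁top : ∀ j ∈ T₁, ∀ k ∈ T₀ᶜ \ T₁, |h k| ≤ |h j|) :
    (1 - (Real.sqrt 2 + 1) * δ) *
        Real.sqrt (∑ j ∈ T₀ ∪ T₁, (h j) ^ 2) ≤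
      Real.sqrt (∑ i, ((X *ᵥ h) i) ^ 2) := by
  rcases Nat.eq_zero_or_pos s with hs0 | hs
  · have hT₀e : T₀ = ∅ := Finset.card_eq_zero.mp (by omega)
    have hT₁e : T₁ = ∅ := Finset.card_eq_zero.mp (by omega)
    rw [hT₀e, hT₁e]
    simp only [Finset.empty_union, Finset.sum_empty, Real.sqrt_zero, mul_zero]
    exact Real.sqrt_nonneg _
  by_cases hc : 1 - (Real.sqrt 2 + 1) * δ ≤ 0
  · exact le_trans (mul_nonpos_of_nonpos_of_nonneg hc (Real.sqrt_nonneg _)) (Real.sqrt_nonneg _)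
  push_neg at hc
  have ht1 : T₁.card ≤ min s T₀ᶜ.card := le_min hT₁card (Finset.card_le_card hT₁sub)
  obtain ⟨T₁', hTT, hT₁'sub, hT₁'card, hT₁'top⟩ :=
    RIPKey.exists_top_subset h (min s T₀ᶜ.card) T₀ᶜ T₁ hT₁sub hT₁top ht1 (min_le_right _ _)
  have hfull : (T₀ᶜ \ T₁').Nonempty → T₁'.card = s := by
    intro hne
    obtain ⟨k, hk⟩ := hne
    rw [Finset.mem_sdiff] at hk
    have hss : T₁' ⊂ T₀ᶜ := (Finset.ssubset_iff_of_subset hT₁'sub).mpr ⟨k, hk.1, hk.2⟩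
    have := Finset.card_lt_card hss
    omega
  have hmain := RIPKey.core s hs X δ hδ0 hδ1 hRIP h T₀ T₁' hT₀card hcone hT₁'sub
    (by omega : T₁'.card ≤ s) hT₁'top hfull hc
  refine le_trans ?_ hmain
  refine mul_le_mul_of_nonneg_left ?_ hc.le
  refine Real.sqrt_le_sqrt ?_
  exact Finset.sum_le_sum_of_subset_of_nonneg (Finset.union_subset_union_right hTT)
    (fun j _ _ => sq_nonneg _)
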